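/- Let Y be a real topological vector space, A ⊆ Y and k ∈ −0⁺A \ {0}. Then φ_{A,k} is continuous if and only if cl(A) − {t·k : t > 0} ⊆ int(A). -/

import Mathlib

open Pointwise

/-- The recession cone `0⁺A` of a set `A`. -/
def recCone {Y : Type*} [AddCommGroup Y] [Module ℝ Y] (A : Set Y) : Set Y :=
  {u | ∀ a ∈ A, ∀ t : ℝ, 0 ≤ t → a + t • u ∈ A}

/-- The Gerstewitz functional `φ_{A,k}`. -/
noncomputable def gerst {Y : Type*} [AddCommGroup Y] [Module ℝ Y]
    (A : Set Y) (k : Y) (y : Y) : EReal :=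
  sInf (Real.toEReal '' {t : ℝ | y - t • k ∈ A})

section Aux

variable {Y : Type*} [AddCommGroup Y] [Module ℝ Y] {A : Set Y} {k : Y}

lemma gerst_upward (hrec : -k ∈ recCone A) {y : Y} {t s : ℝ} (hts : t ≤ s)
    (h : y - t • k ∈ A) : y - s • k ∈ A := by
  have h2 := hrec (y - t • k) h (s - t) (by linarith)
  have : y - t • k + (s - t) • (-k) = y - s • k := by module
  rwa [this] at h2

lemma gerst_le_of_mem {y : Y} {s : ℝ} (h : y - s • k ∈ A) : gerst A k y ≤ (s : EReal) :=
  sInf_le ⟨s, h, rfl⟩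

lemma gerst_lt_iff {y : Y} {c : ℝ} :
    gerst A k y < (c : EReal) ↔ ∃ s : ℝ, s < c ∧ y - s • k ∈ A := by
  rw [gerst, sInf_lt_iff]
  constructor
  · rintro ⟨x, ⟨s, hs, rfl⟩, hx⟩
    exact ⟨s, by exact_mod_cast hx, hs⟩
  · rintro ⟨s, hsc, hs⟩
    exact ⟨s, ⟨s, hs, rfl⟩, by exact_mod_cast hsc⟩

lemma gerst_le_iff (hrec : -k ∈ recCone A) {y : Y} {c : ℝ} :
    gerst A k y ≤ (c : EReal) ↔ ∀ s : ℝ, c < s → y - s • k ∈ A := by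
  constructor
  · intro h s hs
    have : gerst A k y < (s : EReal) := lt_of_le_of_lt h (by exact_mod_cast hs)
    obtain ⟨r, hrs, hr⟩ := gerst_lt_iff.mp this
    exact gerst_upward hrec (le_of_lt hrs) hr
  · intro h
    by_contra hc
    push_neg at hc
    obtain ⟨z, hz1, hz2⟩ := EReal.exists_between_coe_real hc
    exact absurd (gerst_le_of_mem (h z (by exact_mod_cast hz1))) (not_le.mpr hz2)

end Aux

theorem gerst_continuous_iff {Y : Type*} [AddCommGroup Y] [Module ℝ Y] [TopologicalSpace Y]
    [IsTopologicalAddGroup Y] [ContinuousSMul ℝ Y] (A : Set Y) (k : Y)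
    (hk : k ≠ 0) (hrec : -k ∈ recCone A) :
    Continuous (gerst A k) ↔
      closure A - {x : Y | ∃ t : ℝ, 0 < t ∧ x = t • k} ⊆ interior A := by
  constructor
  · -- continuity implies the inclusion
    intro hcont x hx
    rw [Set.mem_sub] at hx
    obtain ⟨a, ha, b, ⟨t, ht, rfl⟩, rfl⟩ := hx
    -- φ ≤ 0 on A, hence on closure A
    have hA0 : ∀ z ∈ A, gerst A k z ≤ (0 : EReal) := by
      intro z hz
      exact gerst_le_of_mem (by simpa using hz)
    have hclosed : IsClosed {z : Y | gerst A k z ≤ (0 : EReal)} :=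
      isClosed_Iic.preimage hcont
    have ha0 : gerst A k a ≤ (0 : EReal) :=
      closure_minimal hA0 hclosed ha
    -- hence a - s•k ∈ A for every s > 0
    have hmem : ∀ s : ℝ, 0 < s → a - s • k ∈ A := by
      intro s hs
      exact (gerst_le_iff hrec).mp (by exact_mod_cast ha0) s hs
    -- so φ (a - t•k) ≤ -t/2 < 0
    have hlt : gerst A k (a - t • k) < (0 : EReal) := by
      have h1 : (a - t • k) - (-(t/2)) • k ∈ A := by
        have : (a - t • k) - (-(t/2)) • k = a - (t/2) • k := by module
        rw [this]; exact hmem (t/2) (by linarith)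
      calc gerst A k (a - t • k) ≤ ((-(t/2) : ℝ) : EReal) := gerst_le_of_mem h1
        _ < (0 : EReal) := by exact_mod_cast (by linarith : -(t/2) < (0:ℝ))
    -- {φ < 0} is open and contained in A
    have hopen : IsOpen {z : Y | gerst A k z < (0 : EReal)} :=
      isOpen_Iio.preimage hcont
    have hsub : {z : Y | gerst A k z < (0 : EReal)} ⊆ A := by
      intro z hz
      obtain ⟨s, hs, hzA⟩ := gerst_lt_iff.mp hz
      have h2 := hrec (z - s • k) hzA (-s) (by linarith)
      have : z - s • k + (-s) • (-k) = z := by module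
      rwa [this] at h2
    exact interior_maximal hsub hopen hlt
  · -- the inclusion implies continuity
    intro H
    have hH : ∀ a ∈ closure A, ∀ t : ℝ, 0 < t → a - t • k ∈ interior A := by
      intro a ha t ht
      exact H (Set.sub_mem_sub ha ⟨t, ht, rfl⟩)
    -- characterize strict sublevel sets
    have hlt_iff : ∀ (c : ℝ) (y : Y),
        gerst A k y < (c : EReal) ↔ y - c • k ∈ interior A := by
      intro c y
      constructor
      · intro h
        obtain ⟨s, hsc, hs⟩ := gerst_lt_iff.mp h
        have := hH (y - s • k) (subset_closure hs) (c - s) (by linarith)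
        have heq : y - s • k - (c - s) • k = y - c • k := by module
        rwa [heq] at this
      · intro h
        have hcontmap : Continuous fun s : ℝ => y - s • k :=
          continuous_const.sub (continuous_id.smul continuous_const)
        have : ∀ᶠ s in nhds c, y - s • k ∈ interior A :=
          hcontmap.continuousAt.eventually_mem (isOpen_interior.mem_nhds h)
        obtain ⟨ε, hε, hball⟩ := Metric.eventually_nhds_iff.mp this
        have hmem : y - (c - ε/2) • k ∈ A := by
          have : dist (c - ε/2) c < ε := by
            rw [Real.dist_eq, abs_lt]; constructor <;> linarith
          exact interior_subset (hball this)
        calc gerst A k y ≤ ((c - ε/2 : ℝ) : EReal) := gerst_le_of_mem hmem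
          _ < (c : EReal) := by exact_mod_cast (by linarith : c - ε/2 < c)
    -- characterize sublevel sets
    have hle_iff : ∀ (c : ℝ) (y : Y),
        gerst A k y ≤ (c : EReal) ↔ y - c • k ∈ closure A := by
      intro c y
      constructor
      · intro h
        have hmem : ∀ s : ℝ, c < s → y - s • k ∈ A := (gerst_le_iff hrec).mp h
        have hcontmap : Continuous fun s : ℝ => y - s • k :=
          continuous_const.sub (continuous_id.smul continuous_const)
        have htend : Filter.Tendsto (fun s : ℝ => y - s • k) (nhdsWithin c (Set.Ioi c))
            (nhds (y - c • k)) :=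
          (hcontmap.tendsto c).mono_left nhdsWithin_le_nhds
        exact mem_closure_of_tendsto htend
          (Filter.eventually_iff_exists_mem.mpr
            ⟨Set.Ioi c, self_mem_nhdsWithin, fun s hs => hmem s hs⟩)
      · intro h
        rw [gerst_le_iff hrec]
        intro s hs
        have := hH (y - c • k) h (s - c) (by linarith)
        have heq : y - c • k - (s - c) • k = y - s • k := by module
        rw [heq] at this
        exact interior_subset this
    -- derive continuity via subbasic open sets of the order topology
    rw [OrderTopology.topology_eq_generate_intervals (α := EReal),
      continuous_generateFrom_iff]
    rintro s ⟨a, rfl | rfl⟩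
    · -- preimage of Ioi a
      have : gerst A k ⁻¹' Set.Ioi a =
          ⋃ c : ℝ, ⋃ _ : a ≤ (c : EReal), {y : Y | ¬ gerst A k y ≤ (c : EReal)} := by
        ext y
        simp only [Set.mem_preimage, Set.mem_Ioi, Set.mem_iUnion, Set.mem_setOf_eq, not_le]
        constructor
        · intro h
          obtain ⟨z, hz1, hz2⟩ := EReal.exists_between_coe_real h
          exact ⟨z, le_of_lt hz1, hz2⟩
        · rintro ⟨c, hac, hc⟩
          exact lt_of_le_of_lt hac hc
      rw [this]
      refine isOpen_iUnion fun c => isOpen_iUnion fun _ => ?_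
      have : {y : Y | ¬ gerst A k y ≤ (c : EReal)} =
          ((fun y : Y => y - c • k) ⁻¹' closure A)ᶜ := by
        ext y
        simp only [Set.mem_setOf_eq, Set.mem_compl_iff, Set.mem_preimage, hle_iff c y]
      rw [this]
      exact (isClosed_closure.preimage
        (continuous_id.sub continuous_const)).isOpen_compl
    · -- preimage of Iio a
      have : gerst A k ⁻¹' Set.Iio a =
          ⋃ c : ℝ, ⋃ _ : (c : EReal) ≤ a, {y : Y | gerst A k y < (c : EReal)} := by
        ext y
        simp only [Set.mem_preimage, Set.mem_Iio, Set.mem_iUnion, Set.mem_setOf_eq]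
        constructor
        · intro h
          obtain ⟨z, hz1, hz2⟩ := EReal.exists_between_coe_real h
          exact ⟨z, le_of_lt hz2, hz1⟩
        · rintro ⟨c, hca, hc⟩
          exact lt_of_lt_of_le hc hca
      rw [this]
      refine isOpen_iUnion fun c => isOpen_iUnion fun _ => ?_
      have : {y : Y | gerst A k y < (c : EReal)} =
          (fun y : Y => y - c • k) ⁻¹' interior A := by
        ext y
        simp only [Set.mem_setOf_eq, Set.mem_preimage, hlt_iff c y]
      rw [this]
      exact isOpen_interior.preimage (continuous_id.sub continuous_const)
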